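/- arXiv:0803.4374 — 4 statements merged into one kernel-verified Lean document; each statement's English description precedes it below -/
import Mathlib

section
/- Let x₀, x₁, x₂ be three pairwise distinct elements of a field k. Then in K^M_2(k), {x₁ - x₀, x₂ - x₀} = {x₀ - x₁, x₂ - x₁} - {x₀ - x₂, x₁ - x₂} + {-1, -1}. -/
open TensorProduct

/-- The subgroup of Steinberg relations in `kˣ ⊗ℤ kˣ`: generated by `a ⊗ b` with `a + b = 1`. -/
noncomputable def SteinbergSubgroup (k : Type*) [Field k] :
    AddSubgroup (Additive kˣ ⊗[ℤ] Additive kˣ) :=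
  AddSubgroup.closure
    {z | ∃ a b : kˣ, (a : k) + (b : k) = 1 ∧
      z = Additive.ofMul a ⊗ₜ[ℤ] Additive.ofMul b}

/-- The second Milnor K-group of a field `k`. -/
abbrev MilnorK2 (k : Type*) [Field k] :=
  (Additive kˣ ⊗[ℤ] Additive kˣ) ⧸ SteinbergSubgroup k

/-- The Milnor symbol `{a, b}` in `K^M_2(k)`. -/
noncomputable def milnorSymbol {k : Type*} [Field k] (a b : kˣ) : MilnorK2 k :=
  QuotientAddGroup.mk (Additive.ofMul a ⊗ₜ[ℤ] Additive.ofMul b)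

section aux
variable {k : Type*} [Field k]

lemma milnorSymbol_mul_left (a b c : kˣ) :
    milnorSymbol (a * b) c = milnorSymbol a c + milnorSymbol b c := by
  unfold milnorSymbol
  rw [show Additive.ofMul (a * b) = Additive.ofMul a + Additive.ofMul b from rfl,
    add_tmul, QuotientAddGroup.mk_add]

lemma milnorSymbol_mul_right (a b c : kˣ) :
    milnorSymbol a (b * c) = milnorSymbol a b + milnorSymbol a c := by
  unfold milnorSymbol
  rw [show Additive.ofMul (b * c) = Additive.ofMul b + Additive.ofMul c from rfl,
    tmul_add, QuotientAddGroup.mk_add]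

lemma milnorSymbol_one_left (b : kˣ) : milnorSymbol 1 b = 0 := by
  unfold milnorSymbol
  rw [show Additive.ofMul (1 : kˣ) = 0 from rfl, zero_tmul, QuotientAddGroup.mk_zero]

lemma milnorSymbol_one_right (a : kˣ) : milnorSymbol a 1 = 0 := by
  unfold milnorSymbol
  rw [show Additive.ofMul (1 : kˣ) = 0 from rfl, tmul_zero, QuotientAddGroup.mk_zero]

lemma milnorSymbol_inv_left (a b : kˣ) : milnorSymbol a⁻¹ b = - milnorSymbol a b := by
  have := milnorSymbol_mul_left a⁻¹ a b
  rw [inv_mul_cancel, milnorSymbol_one_left] at this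
  exact eq_neg_of_add_eq_zero_left this.symm

lemma milnorSymbol_inv_right (a b : kˣ) : milnorSymbol a b⁻¹ = - milnorSymbol a b := by
  have := milnorSymbol_mul_right a b⁻¹ b
  rw [inv_mul_cancel, milnorSymbol_one_right] at this
  exact eq_neg_of_add_eq_zero_left this.symm

lemma milnorSymbol_steinberg (a b : kˣ) (h : (a : k) + (b : k) = 1) :
    milnorSymbol a b = 0 := by
  unfold milnorSymbol
  rw [QuotientAddGroup.eq_zero_iff]
  exact AddSubgroup.subset_closure ⟨a, b, h, rfl⟩

end aux

section aux2
variable {k : Type*} [Field k]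

lemma milnorSymbol_neg_self (a : kˣ) : milnorSymbol a (-a) = 0 := by
  by_cases h : a = 1
  · subst h
    exact milnorSymbol_one_left (-1)
  · have ha1 : (a : k) ≠ 1 := fun hh => h (Units.ext hh)
    have ha0 : (a : k) ≠ 0 := a.ne_zero
    have h1 : (1 : k) - a ≠ 0 := sub_ne_zero_of_ne (Ne.symm ha1)
    have h2 : (1 : k) - (a : k)⁻¹ ≠ 0 := by
      rw [sub_ne_zero]
      intro hh
      apply ha1
      field_simp at hh
      simp [hh]
    set u : kˣ := Units.mk0 ((1 : k) - a) h1 with hu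
    set v : kˣ := Units.mk0 ((1 : k) - (a : k)⁻¹) h2 with hv
    have key : -a = u * v⁻¹ := by
      rw [eq_mul_inv_iff_mul_eq]
      ext
      push_cast [Units.val_mul, hu, hv]
      simp only [Units.val_mk0]
      field_simp
      ring
    have hsu : milnorSymbol a u = 0 :=
      milnorSymbol_steinberg a u (by simp [hu])
    have hsv : milnorSymbol a⁻¹ v = 0 :=
      milnorSymbol_steinberg a⁻¹ v (by
        rw [hv]
        simp [Units.val_inv_eq_inv_val])
    have hsv' : milnorSymbol a v = 0 := by
      have := milnorSymbol_inv_left a⁻¹ v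
      rw [inv_inv, hsv, neg_zero] at this
      exact this
    rw [key, milnorSymbol_mul_right, milnorSymbol_inv_right, hsu, hsv', neg_zero, add_zero]

lemma milnorSymbol_self (a : kˣ) : milnorSymbol a a = milnorSymbol a (-1) := by
  have : a = (-1) * (-a) := by simp
  calc milnorSymbol a a = milnorSymbol a ((-1) * (-a)) := by rw [← this]
    _ = milnorSymbol a (-1) + milnorSymbol a (-a) := milnorSymbol_mul_right _ _ _
    _ = milnorSymbol a (-1) := by rw [milnorSymbol_neg_self, add_zero]

lemma milnorSymbol_two_neg_one (a : kˣ) :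
    milnorSymbol a (-1) + milnorSymbol a (-1) = 0 := by
  rw [← milnorSymbol_mul_right]
  norm_num
  exact milnorSymbol_one_right a

end aux2

theorem milnorSymbol_key_relation_l2 (k : Type*) [Field k] (x₀ x₁ x₂ : k)
    (h01 : x₀ ≠ x₁) (h02 : x₀ ≠ x₂) (h12 : x₁ ≠ x₂) :
    milnorSymbol (Units.mk0 (x₁ - x₀) (sub_ne_zero_of_ne h01.symm))
        (Units.mk0 (x₂ - x₀) (sub_ne_zero_of_ne h02.symm))
      = milnorSymbol (Units.mk0 (x₀ - x₁) (sub_ne_zero_of_ne h01))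
          (Units.mk0 (x₂ - x₁) (sub_ne_zero_of_ne h12.symm))
        - milnorSymbol (Units.mk0 (x₀ - x₂) (sub_ne_zero_of_ne h02))
            (Units.mk0 (x₁ - x₂) (sub_ne_zero_of_ne h12))
        + milnorSymbol (-1 : kˣ) (-1 : kˣ) := by
  set A : kˣ := Units.mk0 (x₁ - x₀) (sub_ne_zero_of_ne h01.symm) with hA
  set B : kˣ := Units.mk0 (x₂ - x₀) (sub_ne_zero_of_ne h02.symm) with hB
  set C : kˣ := Units.mk0 (x₂ - x₁) (sub_ne_zero_of_ne h12.symm) with hC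
  have e1 : Units.mk0 (x₀ - x₁) (sub_ne_zero_of_ne h01) = -A := by ext; simp [hA]
  have e2 : Units.mk0 (x₀ - x₂) (sub_ne_zero_of_ne h02) = -B := by ext; simp [hB]
  have e3 : Units.mk0 (x₁ - x₂) (sub_ne_zero_of_ne h12) = -C := by ext; simp [hC]
  rw [e1, e2, e3]
  have hst : milnorSymbol (A * B⁻¹) (C * B⁻¹) = 0 := by
    apply milnorSymbol_steinberg
    have hB0 : x₂ - x₀ ≠ 0 := sub_ne_zero_of_ne h02.symm
    push_cast [Units.val_mul, Units.val_inv_eq_inv_val, hA, hB, hC]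
    simp only [Units.val_mk0]
    rw [← add_mul, show x₁ - x₀ + (x₂ - x₁) = x₂ - x₀ from by ring, mul_inv_cancel₀ hB0]
  have hexp : milnorSymbol (A * B⁻¹) (C * B⁻¹)
      = milnorSymbol A C - milnorSymbol A B - milnorSymbol B C + milnorSymbol B B := by
    simp only [milnorSymbol_mul_left, milnorSymbol_mul_right, milnorSymbol_inv_left,
      milnorSymbol_inv_right]
    abel
  rw [hexp] at hst
  have hAB : milnorSymbol A B = milnorSymbol A C - milnorSymbol B C + milnorSymbol B B := by
    rw [← sub_eq_zero,
      show milnorSymbol A B - (milnorSymbol A C - milnorSymbol B C + milnorSymbol B B)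
        = -(milnorSymbol A C - milnorSymbol A B - milnorSymbol B C + milnorSymbol B B) from by
        abel, hst, neg_zero]
  have hneg1 : (-A : kˣ) = (-1) * A := (neg_one_mul A).symm
  have hneg2 : (-B : kˣ) = (-1) * B := (neg_one_mul B).symm
  have hneg3 : (-C : kˣ) = (-1) * C := (neg_one_mul C).symm
  rw [hneg1, hneg2, hneg3, hAB, milnorSymbol_self B]
  simp only [milnorSymbol_mul_left, milnorSymbol_mul_right]
  have hB1 : milnorSymbol B (-1 : kˣ) = - milnorSymbol B (-1 : kˣ) := by
    rw [eq_neg_iff_add_eq_zero]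
    exact milnorSymbol_two_neg_one B
  nth_rewrite 1 [hB1]
  abel
end

section
/- For any abelian group G and any map D from pairs of commuting invertible n×n matrices over a field k (for all n ≥ 1) to G satisfying: (i') D(A₁, A₂) = 0 whenever A₁ or A₂ is an identity matrix; (ii) D is additive on block diagonal sums; (iii) D is invariant under simultaneous conjugation; (iv) D is invariant under polynomial homotopy (D(A₁(0), A₂(0)) = D(A₁(1), A₂(1)) for commuting A₁(t), A₂(t) ∈ GL_n(k[t])); D is multiplicative in each argument: D(A·B, C) = D(A, C) + D(B, C) for commuting invertible A, B, C ∈ GL_n(k). -/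
open Matrix Polynomial
set_option linter.unusedSectionVars false

section JDHelpers

variable {k : Type*} [CommRing k] {ι : Type*} [Fintype ι] [DecidableEq ι]

/-- Linear homotopy segment from `V` (at `t = 0`) to `U` (at `t = 1`). -/
noncomputable def JDseg (U V : Matrix ι ι k) : Matrix ι ι (Polynomial k) :=
  (X : Polynomial k) • U.map ⇑(Polynomial.C : k →+* Polynomial k)
    + ((1 : Polynomial k) - X) • V.map ⇑(Polynomial.C : k →+* Polynomial k)

lemma JDseg_eval_zero (U V : Matrix ι ι k) :
    (JDseg U V).map (Polynomial.eval 0) = V := by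
  ext i j
  simp [JDseg, Matrix.add_apply, Matrix.smul_apply, Matrix.map_apply, smul_eq_mul]

lemma JDseg_eval_one (U V : Matrix ι ι k) :
    (JDseg U V).map (Polynomial.eval 1) = U := by
  ext i j
  simp [JDseg, Matrix.add_apply, Matrix.smul_apply, Matrix.map_apply, smul_eq_mul]

lemma JDmapC_eval (r : k) (U : Matrix ι ι k) :
    (U.map ⇑(Polynomial.C : k →+* Polynomial k)).map (Polynomial.eval r) = U := by
  ext i j; simp [Matrix.map_apply]

lemma JDmapC_mul (U V : Matrix ι ι k) :
    U.map ⇑(Polynomial.C : k →+* Polynomial k) * V.map ⇑(Polynomial.C : k →+* Polynomial k)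
      = (U * V).map ⇑(Polynomial.C : k →+* Polynomial k) :=
  (Matrix.map_mul).symm

lemma JDdet_mapC (U : Matrix ι ι k) :
    (U.map ⇑(Polynomial.C : k →+* Polynomial k)).det = Polynomial.C U.det :=
  ((Polynomial.C : k →+* Polynomial k).map_det U).symm

lemma JDmapC_one :
    ((1 : Matrix ι ι k).map ⇑(Polynomial.C : k →+* Polynomial k)) = 1 :=
  Matrix.map_one _ (map_zero _) (map_one _)

lemma JDmapC_neg (U : Matrix ι ι k) :
    ((-U).map ⇑(Polynomial.C : k →+* Polynomial k))
      = -(U.map ⇑(Polynomial.C : k →+* Polynomial k)) := by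
  ext i j; simp [Matrix.map_apply]

lemma JDseg_mul_mapC (U V W : Matrix ι ι k) :
    JDseg U V * W.map ⇑(Polynomial.C : k →+* Polynomial k)
      = JDseg (U * W) (V * W) := by
  unfold JDseg
  rw [add_mul, Matrix.smul_mul, Matrix.smul_mul, JDmapC_mul, JDmapC_mul]

lemma JDmapC_mul_seg (U V W : Matrix ι ι k) :
    W.map ⇑(Polynomial.C : k →+* Polynomial k) * JDseg U V
      = JDseg (W * U) (W * V) := by
  unfold JDseg
  rw [mul_add, Matrix.mul_smul, Matrix.mul_smul, JDmapC_mul, JDmapC_mul]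

lemma JDreindex_map {m n : ℕ} {R S : Type*} [CommRing R] [CommRing S] (f : R → S)
    (P : Matrix (Fin m ⊕ Fin n) (Fin m ⊕ Fin n) R) :
    (Matrix.reindex finSumFinEquiv finSumFinEquiv P).map f
      = Matrix.reindex finSumFinEquiv finSumFinEquiv (P.map f) := by
  simp [Matrix.reindex_apply, Matrix.submatrix_map]

end JDHelpers

theorem joint_determinant_multiplicative (k : Type*) [Field k] (G : Type*) [AddCommGroup G]
    (D : ∀ {n : ℕ}, Matrix (Fin n) (Fin n) k → Matrix (Fin n) (Fin n) k → G)
    (hId : ∀ (n : ℕ) (A : Matrix (Fin n) (Fin n) k), IsUnit A →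
      D A (1 : Matrix (Fin n) (Fin n) k) = 0 ∧ D (1 : Matrix (Fin n) (Fin n) k) A = 0)
    (hBlock : ∀ (m n : ℕ) (A₁ A₂ : Matrix (Fin m) (Fin m) k) (B₁ B₂ : Matrix (Fin n) (Fin n) k),
      IsUnit A₁ → IsUnit A₂ → IsUnit B₁ → IsUnit B₂ →
      A₁ * A₂ = A₂ * A₁ → B₁ * B₂ = B₂ * B₁ →
      D (Matrix.reindex finSumFinEquiv finSumFinEquiv (Matrix.fromBlocks A₁ 0 0 B₁))
        (Matrix.reindex finSumFinEquiv finSumFinEquiv (Matrix.fromBlocks A₂ 0 0 B₂))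
        = D A₁ A₂ + D B₁ B₂)
    (hConj : ∀ (n : ℕ) (A₁ A₂ S : Matrix (Fin n) (Fin n) k),
      IsUnit A₁ → IsUnit A₂ → IsUnit S → A₁ * A₂ = A₂ * A₁ →
      D (S * A₁ * S⁻¹) (S * A₂ * S⁻¹) = D A₁ A₂)
    (hHomotopy : ∀ (n : ℕ) (P₁ P₂ : Matrix (Fin n) (Fin n) (Polynomial k)),
      IsUnit P₁ → IsUnit P₂ → P₁ * P₂ = P₂ * P₁ →
      D (P₁.map (Polynomial.eval 0)) (P₂.map (Polynomial.eval 0))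
        = D (P₁.map (Polynomial.eval 1)) (P₂.map (Polynomial.eval 1))) :
    ∀ (n : ℕ) (A B C : Matrix (Fin n) (Fin n) k),
      IsUnit A → IsUnit B → IsUnit C →
      A * B = B * A → A * C = C * A → B * C = C * B →
      D (A * B) C = D A C + D B C := by
  intro n A B Cc hA hB hC hAB hAC hBC
  classical
  have hAdet : IsUnit A.det := (Matrix.isUnit_iff_isUnit_det A).mp hA
  have hBdet : IsUnit B.det := (Matrix.isUnit_iff_isUnit_det B).mp hB
  have hCdet : IsUnit Cc.det := (Matrix.isUnit_iff_isUnit_det Cc).mp hC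
  have hABu : IsUnit (A * B) := hA.mul hB
  have hABdet : IsUnit (A * B).det := (Matrix.isUnit_iff_isUnit_det _).mp hABu
  have hCAB : (A * B) * Cc = Cc * (A * B) := by
    rw [mul_assoc, hBC, ← mul_assoc, hAC, mul_assoc]
  -- the reindexing algebra equivalences
  set Φ : Matrix (Fin n ⊕ Fin n) (Fin n ⊕ Fin n) k ≃ₐ[k] Matrix (Fin (n + n)) (Fin (n + n)) k :=
    Matrix.reindexAlgEquiv k k finSumFinEquiv with hPhi
  set Ψ : Matrix (Fin n ⊕ Fin n) (Fin n ⊕ Fin n) (Polynomial k)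
      ≃ₐ[Polynomial k] Matrix (Fin (n + n)) (Fin (n + n)) (Polynomial k) :=
    Matrix.reindexAlgEquiv (Polynomial k) (Polynomial k) finSumFinEquiv with hPsi
  -- k-level block matrices
  set CC : Matrix (Fin n ⊕ Fin n) (Fin n ⊕ Fin n) k := Matrix.fromBlocks Cc 0 0 Cc with hCCdef
  set U : Matrix (Fin n ⊕ Fin n) (Fin n ⊕ Fin n) k := Matrix.fromBlocks A 1 0 B with hUdef
  set V : Matrix (Fin n ⊕ Fin n) (Fin n ⊕ Fin n) k :=
    Matrix.fromBlocks (1 : Matrix (Fin n) (Fin n) k) 1 0 (A * B) with hVdef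
  set H0 : Matrix (Fin n ⊕ Fin n) (Fin n ⊕ Fin n) k :=
    Matrix.fromBlocks 0 1 (-(A * B)) (A + B) with hH0def
  set H1 : Matrix (Fin n ⊕ Fin n) (Fin n ⊕ Fin n) k :=
    Matrix.fromBlocks 0 1 (-(A * B)) (1 + A * B) with hH1def
  set T1 : Matrix (Fin n ⊕ Fin n) (Fin n ⊕ Fin n) k :=
    Matrix.fromBlocks (1 : Matrix (Fin n) (Fin n) k) 0 A 1 with hT1def
  set T1i : Matrix (Fin n ⊕ Fin n) (Fin n ⊕ Fin n) k :=
    Matrix.fromBlocks (1 : Matrix (Fin n) (Fin n) k) 0 (-A) 1 with hT1idef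
  set T2 : Matrix (Fin n ⊕ Fin n) (Fin n ⊕ Fin n) k :=
    Matrix.fromBlocks (1 : Matrix (Fin n) (Fin n) k) 0 1 1 with hT2def
  set T2i : Matrix (Fin n ⊕ Fin n) (Fin n ⊕ Fin n) k :=
    Matrix.fromBlocks (1 : Matrix (Fin n) (Fin n) k) 0 (-1) 1 with hT2idef
  -- polynomial-level matrices
  set P1 : Matrix (Fin n ⊕ Fin n) (Fin n ⊕ Fin n) (Polynomial k) :=
    Matrix.fromBlocks (A.map ⇑(Polynomial.C : k →+* Polynomial k)) (JDseg 1 0) 0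
      (B.map ⇑(Polynomial.C : k →+* Polynomial k)) with hP1def
  set P2 : Matrix (Fin n ⊕ Fin n) (Fin n ⊕ Fin n) (Polynomial k) :=
    Matrix.fromBlocks 0 1 ((-(A * B)).map ⇑(Polynomial.C : k →+* Polynomial k))
      (JDseg (1 + A * B) (A + B)) with hP2def
  set P3 : Matrix (Fin n ⊕ Fin n) (Fin n ⊕ Fin n) (Polynomial k) :=
    Matrix.fromBlocks (1 : Matrix (Fin n) (Fin n) (Polynomial k)) (JDseg 1 0) 0
      ((A * B).map ⇑(Polynomial.C : k →+* Polynomial k)) with hP3def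
  set Q : Matrix (Fin n ⊕ Fin n) (Fin n ⊕ Fin n) (Polynomial k) :=
    Matrix.fromBlocks (Cc.map ⇑(Polynomial.C : k →+* Polynomial k)) 0 0
      (Cc.map ⇑(Polynomial.C : k →+* Polynomial k)) with hQdef
  -- units
  have hCCu : IsUnit CC := by
    rw [Matrix.isUnit_iff_isUnit_det, hCCdef, Matrix.det_fromBlocks_zero₂₁]
    exact hCdet.mul hCdet
  have hUu : IsUnit U := by
    rw [Matrix.isUnit_iff_isUnit_det, hUdef, Matrix.det_fromBlocks_zero₂₁]
    exact hAdet.mul hBdet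
  have hVu : IsUnit V := by
    rw [Matrix.isUnit_iff_isUnit_det, hVdef, Matrix.det_fromBlocks_zero₂₁]
    simpa using hABdet
  have hT1u : IsUnit T1 := by
    rw [Matrix.isUnit_iff_isUnit_det, hT1def, Matrix.det_fromBlocks_zero₁₂]
    simp
  have hT2u : IsUnit T2 := by
    rw [Matrix.isUnit_iff_isUnit_det, hT2def, Matrix.det_fromBlocks_zero₁₂]
    simp
  have hP1u : IsUnit P1 := by
    rw [Matrix.isUnit_iff_isUnit_det, hP1def, Matrix.det_fromBlocks_zero₂₁, JDdet_mapC, JDdet_mapC]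
    exact (Polynomial.isUnit_C.mpr hAdet).mul (Polynomial.isUnit_C.mpr hBdet)
  have hP3u : IsUnit P3 := by
    rw [Matrix.isUnit_iff_isUnit_det, hP3def, Matrix.det_fromBlocks_zero₂₁, JDdet_mapC]
    simpa using Polynomial.isUnit_C.mpr hABdet
  have hQu : IsUnit Q := by
    rw [Matrix.isUnit_iff_isUnit_det, hQdef, Matrix.det_fromBlocks_zero₂₁, JDdet_mapC]
    exact (Polynomial.isUnit_C.mpr hCdet).mul (Polynomial.isUnit_C.mpr hCdet)
  -- inverse of A*B over k, used for invertibility of P2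
  have hW1 : (A * B) * (A * B)⁻¹ = 1 := Matrix.mul_nonsing_inv _ hABdet
  have hP2u : IsUnit P2 := by
    have hprod : P2 * Matrix.fromBlocks
        (((A * B)⁻¹).map ⇑(Polynomial.C : k →+* Polynomial k) * JDseg (1 + A * B) (A + B))
        (-(((A * B)⁻¹).map ⇑(Polynomial.C : k →+* Polynomial k))) 1 0 = 1 := by
      rw [hP2def, Matrix.fromBlocks_multiply, ← Matrix.fromBlocks_one]
      refine Matrix.fromBlocks_inj.mpr ⟨by simp, by simp, ?_, ?_⟩
      · rw [← Matrix.mul_assoc, JDmapC_mul, neg_mul, hW1, JDmapC_neg, JDmapC_one]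
        simp
      · rw [mul_neg, JDmapC_mul, neg_mul, hW1, JDmapC_neg, JDmapC_one]
        simp
    have hd : P2.det * (Matrix.fromBlocks
        (((A * B)⁻¹).map ⇑(Polynomial.C : k →+* Polynomial k) * JDseg (1 + A * B) (A + B))
        (-(((A * B)⁻¹).map ⇑(Polynomial.C : k →+* Polynomial k))) 1 0).det = 1 := by
      rw [← Matrix.det_mul, hprod, Matrix.det_one]
    exact (Matrix.isUnit_iff_isUnit_det _).mpr (IsUnit.of_mul_eq_one _ hd)
  -- commutation relations over k
  have hUC : U * CC = CC * U := by
    rw [hUdef, hCCdef, Matrix.fromBlocks_multiply, Matrix.fromBlocks_multiply]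
    refine Matrix.fromBlocks_inj.mpr ⟨by simpa using hAC, by simp, by simp, by simpa using hBC⟩
  have hVC : V * CC = CC * V := by
    rw [hVdef, hCCdef, Matrix.fromBlocks_multiply, Matrix.fromBlocks_multiply]
    refine Matrix.fromBlocks_inj.mpr ⟨by simp, by simp, by simp, by simpa using hCAB⟩
  -- commutation relations over k[t]
  have hcomm1 : P1 * Q = Q * P1 := by
    rw [hP1def, hQdef, Matrix.fromBlocks_multiply, Matrix.fromBlocks_multiply]
    refine Matrix.fromBlocks_inj.mpr ⟨?_, ?_, by simp, ?_⟩
    · simp only [Matrix.mul_zero, Matrix.zero_mul, add_zero, zero_add]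
      rw [JDmapC_mul, JDmapC_mul, hAC]
    · simp only [Matrix.mul_zero, Matrix.zero_mul, add_zero, zero_add]
      rw [JDseg_mul_mapC, JDmapC_mul_seg, one_mul, mul_one, zero_mul, mul_zero]
    · simp only [Matrix.mul_zero, Matrix.zero_mul, add_zero, zero_add]
      rw [JDmapC_mul, JDmapC_mul, hBC]
  have hcomm2 : P2 * Q = Q * P2 := by
    rw [hP2def, hQdef, Matrix.fromBlocks_multiply, Matrix.fromBlocks_multiply]
    refine Matrix.fromBlocks_inj.mpr ⟨by simp, by simp, ?_, ?_⟩
    · simp only [Matrix.zero_mul, Matrix.mul_zero, add_zero, zero_add]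
      rw [JDmapC_mul, JDmapC_mul, neg_mul, mul_neg, hCAB]
    · simp only [Matrix.zero_mul, Matrix.mul_zero, add_zero, zero_add]
      rw [JDseg_mul_mapC, JDmapC_mul_seg, add_mul, mul_add, add_mul, mul_add,
        one_mul, mul_one, hCAB, hAC, hBC]
  have hcomm3 : P3 * Q = Q * P3 := by
    rw [hP3def, hQdef, Matrix.fromBlocks_multiply, Matrix.fromBlocks_multiply]
    refine Matrix.fromBlocks_inj.mpr ⟨by simp, ?_, by simp, ?_⟩
    · simp only [Matrix.mul_zero, Matrix.zero_mul, add_zero, zero_add]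
      rw [JDseg_mul_mapC, JDmapC_mul_seg, one_mul, mul_one, zero_mul, mul_zero]
    · simp only [Matrix.mul_zero, Matrix.zero_mul, add_zero, zero_add]
      rw [JDmapC_mul, JDmapC_mul, hCAB]
  -- conjugation identities over k
  have hT1mul : T1 * T1i = 1 := by
    rw [hT1def, hT1idef, Matrix.fromBlocks_multiply, ← Matrix.fromBlocks_one]
    exact Matrix.fromBlocks_inj.mpr ⟨by simp, by simp, by simp, by simp⟩
  have hT2mul : T2 * T2i = 1 := by
    rw [hT2def, hT2idef, Matrix.fromBlocks_multiply, ← Matrix.fromBlocks_one]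
    exact Matrix.fromBlocks_inj.mpr ⟨by simp, by simp, by simp, by simp⟩
  have hconjU : T1 * U * T1i = H0 := by
    rw [hT1def, hT1idef, hUdef, hH0def, Matrix.fromBlocks_multiply, Matrix.fromBlocks_multiply]
    refine Matrix.fromBlocks_inj.mpr ⟨by simp, by simp, ?_, by simp⟩
    · simp only [Matrix.one_mul, Matrix.mul_one, Matrix.zero_mul, Matrix.mul_zero,
        add_zero, zero_add]
      rw [add_mul, mul_neg, mul_neg, ← hAB]
      abel
  have hconjC1 : T1 * CC * T1i = CC := by
    rw [hT1def, hT1idef, hCCdef, Matrix.fromBlocks_multiply, Matrix.fromBlocks_multiply]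
    refine Matrix.fromBlocks_inj.mpr ⟨by simp, by simp, ?_, by simp⟩
    · simp only [Matrix.one_mul, Matrix.mul_one, Matrix.zero_mul, Matrix.mul_zero,
        add_zero, zero_add]
      rw [mul_neg, hAC]
      abel
  have hconjV : T2 * V * T2i = H1 := by
    rw [hT2def, hT2idef, hVdef, hH1def, Matrix.fromBlocks_multiply, Matrix.fromBlocks_multiply]
    refine Matrix.fromBlocks_inj.mpr ⟨by simp, by simp, ?_, by simp⟩
    · simp only [Matrix.one_mul, Matrix.mul_one, Matrix.zero_mul, Matrix.mul_zero,
        add_zero, zero_add]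
      rw [add_mul, mul_neg, mul_neg, one_mul, mul_one]
      abel
  have hconjC2 : T2 * CC * T2i = CC := by
    rw [hT2def, hT2idef, hCCdef, Matrix.fromBlocks_multiply, Matrix.fromBlocks_multiply]
    refine Matrix.fromBlocks_inj.mpr ⟨by simp, by simp, ?_, by simp⟩
    · simp only [Matrix.one_mul, Matrix.mul_one, Matrix.zero_mul, Matrix.mul_zero,
        add_zero, zero_add]
      simp
  -- evaluation identities
  have E10 : (Ψ P1).map (Polynomial.eval (0 : k)) = Φ (Matrix.fromBlocks A 0 0 B) := by
    rw [hPsi, hPhi]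
    simp only [Matrix.reindexAlgEquiv_apply]
    rw [JDreindex_map]
    refine congrArg _ ?_
    rw [hP1def, Matrix.fromBlocks_map, JDmapC_eval, JDmapC_eval, JDseg_eval_zero,
      Matrix.map_zero _ (by simp)]
  have E11 : (Ψ P1).map (Polynomial.eval (1 : k)) = Φ U := by
    rw [hPsi, hPhi]
    simp only [Matrix.reindexAlgEquiv_apply]
    rw [JDreindex_map]
    refine congrArg _ ?_
    rw [hP1def, hUdef, Matrix.fromBlocks_map, JDmapC_eval, JDmapC_eval, JDseg_eval_one,
      Matrix.map_zero _ (by simp)]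
  have E20 : (Ψ P2).map (Polynomial.eval (0 : k)) = Φ H0 := by
    rw [hPsi, hPhi]
    simp only [Matrix.reindexAlgEquiv_apply]
    rw [JDreindex_map]
    refine congrArg _ ?_
    rw [hP2def, hH0def, Matrix.fromBlocks_map, JDmapC_eval, JDseg_eval_zero,
      Matrix.map_zero _ (by simp), Matrix.map_one _ (by simp) (by simp)]
  have E21 : (Ψ P2).map (Polynomial.eval (1 : k)) = Φ H1 := by
    rw [hPsi, hPhi]
    simp only [Matrix.reindexAlgEquiv_apply]
    rw [JDreindex_map]
    refine congrArg _ ?_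
    rw [hP2def, hH1def, Matrix.fromBlocks_map, JDmapC_eval, JDseg_eval_one,
      Matrix.map_zero _ (by simp), Matrix.map_one _ (by simp) (by simp)]
  have E30 : (Ψ P3).map (Polynomial.eval (0 : k))
      = Φ (Matrix.fromBlocks (1 : Matrix (Fin n) (Fin n) k) 0 0 (A * B)) := by
    rw [hPsi, hPhi]
    simp only [Matrix.reindexAlgEquiv_apply]
    rw [JDreindex_map]
    refine congrArg _ ?_
    rw [hP3def, Matrix.fromBlocks_map, JDmapC_eval, JDseg_eval_zero,
      Matrix.map_zero _ (by simp), Matrix.map_one _ (by simp) (by simp)]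
  have E31 : (Ψ P3).map (Polynomial.eval (1 : k)) = Φ V := by
    rw [hPsi, hPhi]
    simp only [Matrix.reindexAlgEquiv_apply]
    rw [JDreindex_map]
    refine congrArg _ ?_
    rw [hP3def, hVdef, Matrix.fromBlocks_map, JDmapC_eval, JDseg_eval_one,
      Matrix.map_zero _ (by simp), Matrix.map_one _ (by simp) (by simp)]
  have EQ : ∀ r : k, (Ψ Q).map (Polynomial.eval r) = Φ CC := by
    intro r
    rw [hPsi, hPhi]
    simp only [Matrix.reindexAlgEquiv_apply]
    rw [JDreindex_map]
    refine congrArg _ ?_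
    rw [hQdef, hCCdef, Matrix.fromBlocks_map, JDmapC_eval,
      Matrix.map_zero _ (by simp)]
  -- Step 1 : block decomposition
  have step1 : D (Φ (Matrix.fromBlocks A 0 0 B)) (Φ CC) = D A Cc + D B Cc := by
    rw [hCCdef, hPhi]
    simp only [Matrix.reindexAlgEquiv_apply]
    exact hBlock n n A Cc B Cc hA hC hB hC hAC hBC
  have step7 : D (Φ (Matrix.fromBlocks (1 : Matrix (Fin n) (Fin n) k) 0 0 (A * B))) (Φ CC)
      = D (1 : Matrix (Fin n) (Fin n) k) Cc + D (A * B) Cc := by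
    rw [hCCdef, hPhi]
    simp only [Matrix.reindexAlgEquiv_apply]
    exact hBlock n n 1 Cc (A * B) Cc isUnit_one hC hABu hC (by simp) hCAB
  -- Step 2 : homotopy from diag(A,B) to U
  have step2 : D (Φ (Matrix.fromBlocks A 0 0 B)) (Φ CC) = D (Φ U) (Φ CC) := by
    have h := hHomotopy (n + n) (Ψ P1) (Ψ Q) (hP1u.map Ψ) (hQu.map Ψ)
      (by rw [← _root_.map_mul, hcomm1, _root_.map_mul])
    rwa [E10, E11, EQ 0, EQ 1] at h
  -- Step 3 : conjugation from U to H0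
  have hT1inv : (Φ T1)⁻¹ = Φ T1i :=
    Matrix.inv_eq_right_inv (by rw [← _root_.map_mul, hT1mul, _root_.map_one])
  have step3 : D (Φ U) (Φ CC) = D (Φ H0) (Φ CC) := by
    have h := hConj (n + n) (Φ U) (Φ CC) (Φ T1) (hUu.map Φ) (hCCu.map Φ) (hT1u.map Φ)
      (by rw [← _root_.map_mul, hUC, _root_.map_mul])
    rw [hT1inv, ← _root_.map_mul, ← _root_.map_mul, ← _root_.map_mul, ← _root_.map_mul, hconjU, hconjC1] at h
    exact h.symm
  -- Step 4 : homotopy from H0 to H1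
  have step4 : D (Φ H0) (Φ CC) = D (Φ H1) (Φ CC) := by
    have h := hHomotopy (n + n) (Ψ P2) (Ψ Q) (hP2u.map Ψ) (hQu.map Ψ)
      (by rw [← _root_.map_mul, hcomm2, _root_.map_mul])
    rwa [E20, E21, EQ 0, EQ 1] at h
  -- Step 5 : conjugation from V to H1
  have hT2inv : (Φ T2)⁻¹ = Φ T2i :=
    Matrix.inv_eq_right_inv (by rw [← _root_.map_mul, hT2mul, _root_.map_one])
  have step5 : D (Φ H1) (Φ CC) = D (Φ V) (Φ CC) := by
    have h := hConj (n + n) (Φ V) (Φ CC) (Φ T2) (hVu.map Φ) (hCCu.map Φ) (hT2u.map Φ)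
      (by rw [← _root_.map_mul, hVC, _root_.map_mul])
    rw [hT2inv, ← _root_.map_mul, ← _root_.map_mul, ← _root_.map_mul, ← _root_.map_mul, hconjV, hconjC2] at h
    exact h
  -- Step 6 : homotopy from diag(1, AB) to V
  have step6 : D (Φ V) (Φ CC)
      = D (Φ (Matrix.fromBlocks (1 : Matrix (Fin n) (Fin n) k) 0 0 (A * B))) (Φ CC) := by
    have h := hHomotopy (n + n) (Ψ P3) (Ψ Q) (hP3u.map Ψ) (hQu.map Ψ)
      (by rw [← _root_.map_mul, hcomm3, _root_.map_mul])
    rw [E30, E31, EQ 0, EQ 1] at h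
    exact h.symm
  have hid := (hId n Cc hC).2
  calc D (A * B) Cc = D (1 : Matrix (Fin n) (Fin n) k) Cc + D (A * B) Cc := by
        rw [hid, zero_add]
    _ = D A Cc + D B Cc := by
        rw [← step7, ← step6, ← step5, ← step4, ← step3, ← step2, step1]
end

section
/- Let D be a map from single invertible matrices over a field k (of all finite sizes) to an abelian group G that vanishes on identity matrices, is additive on block diagonal sums, is invariant under conjugation, and is invariant under polynomial homotopy. Then D vanishes on every elementary matrix (a matrix differing from the identity by one off-diagonal entry) and D factors through the determinant: if det A = det B for A, B ∈ GL_n(k), then D(A) = D(B). -/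
open Matrix Polynomial

section Aux

variable {k : Type*} [Field k] {n : ℕ}

private theorem whitehead_eq' (i j : Fin n) (hij : i ≠ j) (u : k) (hu : u ≠ 0) :
    Matrix.diagonal (fun l => if l = i then u else if l = j then u⁻¹ else 1) =
      transvection i j u * transvection j i (-u⁻¹) * transvection i j u *
      (transvection i j (-1) * transvection j i 1 * transvection i j (-1)) := by
  have hji : j ≠ i := hij.symm
  have tv : ∀ (a b : Fin n) (c : k), transvection a b c = 1 + c • single a b (1:k) := by
    intro a b c
    rw [transvection, smul_single, smul_eq_mul, mul_one]
  have hdiag : Matrix.diagonal (fun l => if l = i then u else if l = j then u⁻¹ else 1) =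
      1 + (u-1) • single i i (1:k) + (u⁻¹-1) • single j j (1:k) := by
    ext a b
    rcases eq_or_ne a b with rfl | hab
    · rcases eq_or_ne a i with rfl | hai <;> rcases eq_or_ne a j with rfl | haj <;>
        simp_all [diagonal_apply, single, eq_comm] <;> ring
    · rcases eq_or_ne a i with rfl | hai <;> rcases eq_or_ne a j with rfl | haj <;>
        simp_all [diagonal_apply, single, Matrix.one_apply, eq_comm]
  rw [hdiag]
  simp only [tv, add_mul, mul_add, one_mul, mul_one, smul_mul_smul_comm, mul_smul_comm,
    smul_mul_assoc, Matrix.single_mul_single_same, Matrix.single_mul_single_of_ne, hij, hji,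
    ne_eq, not_false_eq_true, add_zero, zero_add, mul_zero, zero_mul, smul_zero, smul_smul]
  match_scalars <;> (try field_simp) <;> ring

private theorem isUnit_one_add_std {R : Type*} [CommRing R] (i j : Fin n) (hij : i ≠ j) (c : R) :
    IsUnit (1 + single i j c) := by
  rw [Matrix.isUnit_iff_isUnit_det]
  have : (1 + single i j c) = transvection i j c := rfl
  rw [this, det_transvection_of_ne i j hij c]
  exact isUnit_one

private theorem map_CC (M : Matrix (Fin n) (Fin n) k) (r : k) :
    (M.map (Polynomial.C : k → k[X])).map (Polynomial.eval r) = M := by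
  ext a b; simp [Matrix.map_apply]

private theorem map_evalmul (M N : Matrix (Fin n) (Fin n) k[X]) (r : k) :
    (M * N).map (Polynomial.eval r) = M.map (Polynomial.eval r) * N.map (Polynomial.eval r) := by
  rw [← Polynomial.coe_evalRingHom]
  exact Matrix.map_mul

private theorem map_one_add_std (i j : Fin n) (p : k[X]) (r : k) :
    (1 + single i j p).map (Polynomial.eval r) = 1 + single i j (p.eval r) := by
  ext a b
  simp only [Matrix.map_apply, Matrix.add_apply, Matrix.one_apply, single, of_apply]
  rw [Polynomial.eval_add, apply_ite (Polynomial.eval r), apply_ite (Polynomial.eval r)]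
  simp

private theorem isUnit_mapC (M : Matrix (Fin n) (Fin n) k) (h : IsUnit M) :
    IsUnit (M.map (Polynomial.C : k → k[X])) := by
  rw [Matrix.isUnit_iff_isUnit_det] at h ⊢
  rw [← RingHom.mapMatrix_apply, ← RingHom.map_det]
  exact h.map (Polynomial.C : k →+* k[X])

private theorem isUnit_diagonal' (d : Fin n → k) (hd : ∀ i, d i ≠ 0) :
    IsUnit (Matrix.diagonal d) := by
  rw [Matrix.isUnit_iff_isUnit_det, det_diagonal]
  exact isUnit_iff_ne_zero.2 (Finset.prod_ne_zero_iff.2 fun i _ => hd i)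

end Aux

theorem determinant_factors (k : Type*) [Field k] (G : Type*) [AddCommGroup G]
    (D : ∀ {n : ℕ}, Matrix (Fin n) (Fin n) k → G)
    (hId : ∀ n : ℕ, D (1 : Matrix (Fin n) (Fin n) k) = 0)
    (hBlock : ∀ (m n : ℕ) (A : Matrix (Fin m) (Fin m) k) (B : Matrix (Fin n) (Fin n) k),
      IsUnit A → IsUnit B →
      D (Matrix.reindex finSumFinEquiv finSumFinEquiv (Matrix.fromBlocks A 0 0 B))
        = D A + D B)
    (hConj : ∀ (n : ℕ) (A S : Matrix (Fin n) (Fin n) k), IsUnit A → IsUnit S →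
      D (S * A * S⁻¹) = D A)
    (hHomotopy : ∀ (n : ℕ) (P : Matrix (Fin n) (Fin n) (Polynomial k)), IsUnit P →
      D (P.map (Polynomial.eval 0)) = D (P.map (Polynomial.eval 1))) :
    (∀ (n : ℕ) (i j : Fin n), i ≠ j → ∀ c : k,
      D (1 + Matrix.single i j c) = 0) ∧
    (∀ (n : ℕ) (A B : Matrix (Fin n) (Fin n) k), IsUnit A → IsUnit B →
      A.det = B.det → D A = D B) := by
  classical
  -- transvections in the middle can be removed
  have lemT : ∀ (m : ℕ) (X Y : Matrix (Fin m) (Fin m) k), IsUnit X → IsUnit Y →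
      ∀ (i j : Fin m), i ≠ j → ∀ c : k,
      D (X * ((1 + Matrix.single i j c) * Y)) = D (X * Y) := by
    intro m X Y hX hY i j hij c
    set P : Matrix (Fin m) (Fin m) k[X] :=
      X.map Polynomial.C * ((1 + Matrix.single i j (Polynomial.C c * Polynomial.X)) *
        Y.map Polynomial.C) with hP
    have hPu : IsUnit P :=
      (isUnit_mapC X hX).mul ((isUnit_one_add_std i j hij _).mul (isUnit_mapC Y hY))
    have hmap : ∀ r : k, P.map (Polynomial.eval r) =
        X * ((1 + Matrix.single i j (c * r)) * Y) := by
      intro r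
      rw [hP, map_evalmul, map_evalmul, map_CC, map_CC, map_one_add_std]
      simp
    have h0 := hHomotopy m P hPu
    rw [hmap 0, hmap 1] at h0
    simpa using h0.symm
  -- strip a leftmost transvection
  have lemT1 : ∀ (m : ℕ) (Y : Matrix (Fin m) (Fin m) k), IsUnit Y →
      ∀ (i j : Fin m), i ≠ j → ∀ c : k,
      D ((1 + Matrix.single i j c) * Y) = D Y := by
    intro m Y hY i j hij c
    have := lemT m 1 Y isUnit_one hY i j hij c
    simpa using this
  -- strip a list of transvections on the left
  have lemList : ∀ (m : ℕ) (L : List (TransvectionStruct (Fin m) k))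
      (Y : Matrix (Fin m) (Fin m) k), IsUnit Y →
      D ((L.map TransvectionStruct.toMatrix).prod * Y) = D Y := by
    intro m L
    induction L with
    | nil => intro Y hY; simp
    | cons t L IH =>
      intro Y hY
      have hLu : IsUnit (L.map TransvectionStruct.toMatrix).prod := by
        rw [Matrix.isUnit_iff_isUnit_det, TransvectionStruct.det_toMatrix_prod]
        exact isUnit_one
      have ht : t.toMatrix = 1 + Matrix.single t.i t.j t.c := rfl
      rw [List.map_cons, List.prod_cons, mul_assoc, ht,
        lemT1 m _ (hLu.mul hY) t.i t.j t.hij t.c]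
      exact IH Y hY
  -- Whitehead: strip a diag(u, u⁻¹) factor
  have lemW : ∀ (m : ℕ) (i j : Fin m), i ≠ j → ∀ u : k, u ≠ 0 →
      ∀ Y : Matrix (Fin m) (Fin m) k, IsUnit Y →
      D (Matrix.diagonal (fun l => if l = i then u else if l = j then u⁻¹ else 1) * Y) = D Y := by
    intro m i j hij u hu Y hY
    rw [whitehead_eq' i j hij u hu]
    have hT : ∀ (a b : Fin m), a ≠ b → ∀ (c : k) (Z : Matrix (Fin m) (Fin m) k), IsUnit Z →
        IsUnit ((1 + Matrix.single a b c) * Z) := by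
      intro a b hab c Z hZ
      exact (isUnit_one_add_std a b hab c).mul hZ
    have e : ∀ (a b : Fin m) (c : k), transvection a b c = 1 + Matrix.single a b c :=
      fun _ _ _ => rfl
    have hji : j ≠ i := hij.symm
    simp only [mul_assoc, e]
    rw [lemT1 m _ (hT j i hji _ _ (hT i j hij _ _ (hT i j hij _ _ (hT j i hji _ _
        (hT i j hij _ _ hY)))))  i j hij]
    rw [lemT1 m _ (hT i j hij _ _ (hT i j hij _ _ (hT j i hji _ _
        (hT i j hij _ _ hY)))) j i hji]
    rw [lemT1 m _ (hT i j hij _ _ (hT j i hji _ _ (hT i j hij _ _ hY))) i j hij]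
    rw [lemT1 m _ (hT j i hji _ _ (hT i j hij _ _ hY)) i j hij]
    rw [lemT1 m _ (hT i j hij _ _ hY) j i hji]
    rw [lemT1 m _ hY i j hij]
  -- eliminate a determinant-one diagonal matrix
  have lemDE : ∀ (m : ℕ) (s : Finset (Fin m)) (d : Fin m → k),
      (∀ l, d l ≠ 1 → l ∈ s) → (∀ l, d l ≠ 0) → (∏ l, d l = 1) →
      ∀ Y : Matrix (Fin m) (Fin m) k, IsUnit Y → D (Matrix.diagonal d * Y) = D Y := by
    intro m s
    induction s using Finset.strongInductionOn with
    | _ s IH =>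
      intro d hs hd0 hprod Y hY
      by_cases htriv : ∀ l, d l = 1
      · have : d = fun _ => 1 := funext htriv
        rw [this, Matrix.diagonal_one, one_mul]
      · push_neg at htriv
        obtain ⟨i, hi⟩ := htriv
        have his : i ∈ s := hs i hi
        -- find another nontrivial index
        have : ∃ j, j ≠ i ∧ d j ≠ 1 := by
          by_contra hc
          push_neg at hc
          have : ∏ l, d l = d i := by
            apply Finset.prod_eq_single i
            · intro b _ hb; exact hc b hb
            · intro h; exact absurd (Finset.mem_univ i) h
          exact hi (this.symm.trans hprod)
        obtain ⟨j, hji, hj⟩ := this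
        have hjs : j ∈ s := hs j hj
        set d' : Fin m → k := Function.update (Function.update d j (d i * d j)) i 1 with hd'
        have hd'i : d' i = 1 := by simp [hd']
        have hd'j : d' j = d i * d j := by
          simp [hd', Function.update_of_ne hji, Function.update_self]
        have hd'other : ∀ l, l ≠ i → l ≠ j → d' l = d l := by
          intro l hli hlj
          simp [hd', Function.update_of_ne hli, Function.update_of_ne hlj]
        have hfun : d = fun l =>
            (if l = i then d i else if l = j then (d i)⁻¹ else 1) * d' l := by
          funext l
          rcases eq_or_ne l i with rfl | hli
          · simp [hd'i]
          · rcases eq_or_ne l j with rfl | hlj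
            · rw [if_neg hli, if_pos rfl, hd'j, ← mul_assoc, inv_mul_cancel₀ (hd0 i), one_mul]
            · rw [if_neg hli, if_neg hlj, hd'other l hli hlj, one_mul]
        have hfac : Matrix.diagonal d =
            Matrix.diagonal (fun l => if l = i then d i else if l = j then (d i)⁻¹ else 1) *
              Matrix.diagonal d' := by
          rw [Matrix.diagonal_mul_diagonal]
          exact congrArg Matrix.diagonal hfun
        have hd'0 : ∀ l, d' l ≠ 0 := by
          intro l
          rcases eq_or_ne l i with rfl | hli
          · rw [hd'i]; exact one_ne_zero
          · rcases eq_or_ne l j with rfl | hlj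
            · rw [hd'j]; exact mul_ne_zero (hd0 i) (hd0 _)
            · rw [hd'other l hli hlj]; exact hd0 l
        have hprod' : ∏ l, d' l = 1 := by
          have h1 : ∏ l, d' l = d' i * (d' j * ∏ x ∈ (Finset.univ.erase i).erase j, d' x) := by
            rw [Finset.mul_prod_erase (Finset.univ.erase i) d'
                (Finset.mem_erase.2 ⟨hji, Finset.mem_univ j⟩),
              Finset.mul_prod_erase Finset.univ d' (Finset.mem_univ i)]
          have h2 : ∏ l, d l = d i * (d j * ∏ x ∈ (Finset.univ.erase i).erase j, d x) := by
            rw [Finset.mul_prod_erase (Finset.univ.erase i) d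
                (Finset.mem_erase.2 ⟨hji, Finset.mem_univ j⟩),
              Finset.mul_prod_erase Finset.univ d (Finset.mem_univ i)]
          have h3 : ∏ x ∈ (Finset.univ.erase i).erase j, d' x
              = ∏ x ∈ (Finset.univ.erase i).erase j, d x := by
            refine Finset.prod_congr rfl (fun x hx => ?_)
            have hxj : x ≠ j := (Finset.mem_erase.1 hx).1
            have hxi : x ≠ i := (Finset.mem_erase.1 (Finset.mem_erase.1 hx).2).1
            exact hd'other x hxi hxj
          have h4 := hprod
          rw [h2] at h4
          rw [h1, hd'i, hd'j, h3, one_mul, mul_assoc]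
          exact h4
        have hY' : IsUnit (Matrix.diagonal d' * Y) := (isUnit_diagonal' d' hd'0).mul hY
        rw [hfac, mul_assoc, lemW m i j (Ne.symm hji) (d i) (hd0 i) _ hY']
        · exact IH (s.erase i) (Finset.erase_ssubset his) d'
            (fun l hl => by
              rcases eq_or_ne l i with rfl | hli
              · exact absurd hd'i hl
              · refine Finset.mem_erase.2 ⟨hli, ?_⟩
                rcases eq_or_ne l j with rfl | hlj
                · exact hjs
                · exact hs l (by rwa [hd'other l hli hlj] at hl))
            hd'0 hprod' Y hY
  constructor
  · intro n i j hij c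
    have := lemT n 1 1 isUnit_one isUnit_one i j hij c
    simpa [hId] using this
  · intro n A B hA hB hdet
    have hBdet : IsUnit B.det := (Matrix.isUnit_iff_isUnit_det B).1 hB
    set M := A * B⁻¹ with hM
    have hMdet : M.det = 1 := by
      rw [hM, Matrix.det_mul, Matrix.det_nonsing_inv, hdet]
      exact Ring.mul_inverse_cancel _ hBdet
    have hMu : IsUnit M := by
      rw [Matrix.isUnit_iff_isUnit_det, hMdet]; exact isUnit_one
    have hMB : M * B = A := by
      rw [hM, mul_assoc, Matrix.nonsing_inv_mul B hBdet, mul_one]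
    obtain ⟨L, L', d, hLL⟩ := Matrix.Pivot.exists_list_transvec_mul_diagonal_mul_list_transvec M
    have hdprod : ∏ l, d l = 1 := by
      have := congrArg Matrix.det hLL
      rw [hMdet] at this
      simpa [Matrix.det_mul, Matrix.det_diagonal] using this.symm
    have hd0 : ∀ l, d l ≠ 0 := by
      intro l hl
      apply one_ne_zero (α := k)
      rw [← hdprod]
      exact Finset.prod_eq_zero (Finset.mem_univ l) hl
    have hL'u : IsUnit (L'.map TransvectionStruct.toMatrix).prod := by
      rw [Matrix.isUnit_iff_isUnit_det, TransvectionStruct.det_toMatrix_prod]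
      exact isUnit_one
    calc D A = D (M * B) := by rw [hMB]
    _ = D ((L.map TransvectionStruct.toMatrix).prod *
          (Matrix.diagonal d * ((L'.map TransvectionStruct.toMatrix).prod * B))) := by
          rw [hLL]; simp only [mul_assoc]
    _ = D (Matrix.diagonal d * ((L'.map TransvectionStruct.toMatrix).prod * B)) := by
          refine lemList n L _ ?_
          exact (isUnit_diagonal' d hd0).mul (hL'u.mul hB)
    _ = D ((L'.map TransvectionStruct.toMatrix).prod * B) :=
          lemDE n Finset.univ d (fun l _ => Finset.mem_univ l) hd0 hdprod _ (hL'u.mul hB)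
    _ = D B := lemList n L' B hB
end

section
/- In K^M_2(𝔽_q) for a finite field 𝔽_q, every symbol vanishes: {a, b} = 0 for all nonzero a, b ∈ 𝔽_q; hence K^M_2(𝔽_q) = 0. -/
open TensorProduct

section Aux

variable {k : Type*} [Field k]

lemma milnorSymbol_of_add_eq_one {a b : kˣ} (h : (a : k) + (b : k) = 1) :
    milnorSymbol a b = 0 :=
  (QuotientAddGroup.eq_zero_iff _).2 <| AddSubgroup.subset_closure ⟨a, b, h, rfl⟩

lemma milnorSymbol_zpow (g : kˣ) (m n : ℤ) :
    milnorSymbol (g ^ m) (g ^ n) = (m * n) • milnorSymbol g g := by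
  have h : (Additive.ofMul (g ^ m)) ⊗ₜ[ℤ] (Additive.ofMul (g ^ n))
      = (m * n) • ((Additive.ofMul g) ⊗ₜ[ℤ] (Additive.ofMul g)) := by
    rw [ofMul_zpow, ofMul_zpow,
      ← TensorProduct.smul_tmul' m (Additive.ofMul g) (n • Additive.ofMul g),
      TensorProduct.tmul_smul n (Additive.ofMul g) (Additive.ofMul g), smul_smul]
  show QuotientAddGroup.mk _ = _
  rw [h, QuotientAddGroup.mk_zsmul]
  rfl

lemma isSquare_units_val_iff {a : kˣ} : IsSquare (a : k) ↔ IsSquare a := by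
  constructor
  · rintro ⟨s, hs⟩
    have hs0 : s ≠ 0 := by
      rintro rfl
      exact a.ne_zero (by simpa using hs)
    exact ⟨Units.mk0 s hs0, Units.ext (by simp [hs])⟩
  · rintro ⟨t, rfl⟩
    exact ⟨(t : k), by simp⟩

/-- In a finite field of odd characteristic there are two nonsquare units summing to `1`. -/
lemma exists_nonsquare_pair (k : Type*) [Field k] [Fintype k] (hF : ringChar k ≠ 2) :
    ∃ a b : kˣ, ¬IsSquare a ∧ ¬IsSquare b ∧ (a : k) + (b : k) = 1 := by
  classical
  by_contra hcon
  push_neg at hcon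
  -- restate in the field
  have hcon' : ∀ a : k, a ≠ 0 → ¬IsSquare a → IsSquare (1 - a) := by
    intro a ha hns
    by_contra hb
    have hb0 : (1 : k) - a ≠ 0 := by
      intro h
      exact hns (by rw [sub_eq_zero] at h; rw [← h]; exact IsSquare.one)
    have := hcon (Units.mk0 a ha) (Units.mk0 _ hb0)
    rw [← isSquare_units_val_iff, ← isSquare_units_val_iff] at this
    simp only [Units.val_mk0] at this
    exact (this hns hb) (by ring)
  set S : Finset k := Finset.univ.filter (fun a => IsSquare a) with hS
  set N : Finset k := Finset.univ.filter (fun a => ¬ IsSquare a) with hN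
  have h0S : (0 : k) ∈ S := by simp [hS, IsSquare.zero]
  have h1S : (1 : k) ∈ S := by simp [hS, IsSquare.one]
  -- cardinalities: #S - 1 = #N
  have hsum := quadraticChar_sum_zero hF
  have hsplit : ∑ a : k, quadraticChar k a
      = ∑ a ∈ S, quadraticChar k a + ∑ a ∈ N, quadraticChar k a :=
    (Finset.sum_filter_add_sum_filter_not _ _ _).symm
  have hSsum : ∑ a ∈ S, quadraticChar k a = (S.card : ℤ) - 1 := by
    rw [← Finset.add_sum_erase _ _ h0S]
    have : ∑ a ∈ S.erase 0, quadraticChar k a = ∑ a ∈ S.erase 0, 1 := by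
      refine Finset.sum_congr rfl fun a ha => ?_
      rw [quadraticChar_one_iff_isSquare (Finset.ne_of_mem_erase ha)]
      exact (Finset.mem_filter.1 (Finset.mem_of_mem_erase ha)).2
    rw [this, Finset.sum_const, Finset.card_erase_of_mem h0S]
    have hcard : 1 ≤ S.card := Finset.card_pos.2 ⟨0, h0S⟩
    simp [MulChar.map_zero]
    push_cast [Nat.cast_sub hcard]
    ring
  have hNsum : ∑ a ∈ N, quadraticChar k a = -(N.card : ℤ) := by
    have : ∑ a ∈ N, quadraticChar k a = ∑ a ∈ N, (-1) := by
      refine Finset.sum_congr rfl fun a ha => ?_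
      exact quadraticChar_neg_one_iff_not_isSquare.2 (Finset.mem_filter.1 ha).2
    rw [this, Finset.sum_const]
    simp
  have hcard : S.card = N.card + 1 := by
    have : (S.card : ℤ) - 1 - N.card = 0 := by
      rw [hsum, hSsum, hNsum] at hsplit
      omega
    omega
  -- the injection from nonsquares into squares minus {0, 1}
  have hmaps : ∀ a ∈ N, (1 - a) ∈ (S.erase 0).erase 1 := by
    intro a ha
    have hans := (Finset.mem_filter.1 ha).2
    have ha0 : a ≠ 0 := fun h => hans (h ▸ IsSquare.zero)
    have hsq := hcon' a ha0 hans
    have hne0 : (1 : k) - a ≠ 0 := by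
      intro h
      rw [sub_eq_zero] at h
      exact hans (h ▸ IsSquare.one)
    have hne1 : (1 : k) - a ≠ 1 := by
      intro h
      apply ha0
      have := sub_eq_self.mp h
      simpa using this
    refine Finset.mem_erase.2 ⟨hne1, Finset.mem_erase.2 ⟨hne0, ?_⟩⟩
    simp [hS, hsq]
  have hinj : Set.InjOn (fun a : k => 1 - a) N := by
    intro a _ b _ h
    have h' : (1 : k) - a = 1 - b := h
    exact sub_right_injective h'
  have hle := Finset.card_le_card_of_injOn _ hmaps hinj
  rw [Finset.card_erase_of_mem (Finset.mem_erase.2 ⟨one_ne_zero, h1S⟩),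
    Finset.card_erase_of_mem h0S, hcard] at hle
  have hNpos : 0 < N.card := by
    obtain ⟨a, hna⟩ := FiniteField.exists_nonsquare hF
    exact Finset.card_pos.2 ⟨a, by simp [hN, hna]⟩
  omega

end Aux

theorem milnorK2_finite_field (k : Type*) [Field k] [Fintype k] :
    (∀ a b : kˣ, milnorSymbol a b = 0) ∧ Subsingleton (MilnorK2 k) := by
  classical
  obtain ⟨g, hg⟩ := IsCyclic.exists_generator (α := kˣ)
  -- 2 • {g, g} = 0
  have h1 : milnorSymbol g g + milnorSymbol g (-1) = 0 := by
    have hneg : (-g : kˣ) = g * (-1) := by rw [mul_neg_one]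
    have := milnorSymbol_neg_self g
    rw [hneg, milnorSymbol_mul_right] at this
    exact this
  have h2 : milnorSymbol g (-1) + milnorSymbol g (-1) = 0 := by
    have : milnorSymbol g ((-1) * (-1)) = 0 := by
      rw [neg_mul_neg, one_mul, milnorSymbol_one_right]
    rwa [milnorSymbol_mul_right] at this
  have htwo : milnorSymbol g g + milnorSymbol g g = 0 := by
    have h3 : (milnorSymbol g g + milnorSymbol g (-1))
        + (milnorSymbol g g + milnorSymbol g (-1))
        - (milnorSymbol g (-1) + milnorSymbol g (-1))
        = milnorSymbol g g + milnorSymbol g g := by abel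
    rw [h1, h2] at h3
    simpa using h3.symm
  -- {g, g} = 0
  have hgg : milnorSymbol g g = 0 := by
    by_cases hchar : ringChar k = 2
    · haveI : CharP k 2 := by rw [← hchar]; exact ringChar.charP k
      have : (-g : kˣ) = g := Units.ext (by rw [Units.val_neg, CharTwo.neg_eq])
      have h := milnorSymbol_neg_self g
      rwa [this] at h
    · obtain ⟨a, b, hna, hnb, hab⟩ := exists_nonsquare_pair k hchar
      obtain ⟨i, hi⟩ := Subgroup.mem_zpowers_iff.1 (hg a)
      obtain ⟨j, hj⟩ := Subgroup.mem_zpowers_iff.1 (hg b)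
      have hio : Odd i := by
        rcases Int.even_or_odd i with he | ho
        · obtain ⟨t, ht⟩ := he
          exact absurd ⟨g ^ t, by rw [← hi, ht, ← zpow_add]⟩ hna
        · exact ho
      have hjo : Odd j := by
        rcases Int.even_or_odd j with he | ho
        · obtain ⟨t, ht⟩ := he
          exact absurd ⟨g ^ t, by rw [← hj, ht, ← zpow_add]⟩ hnb
        · exact ho
      have hij : (i * j) • milnorSymbol g g = 0 := by
        rw [← milnorSymbol_zpow, hi, hj]
        exact milnorSymbol_of_add_eq_one hab
      obtain ⟨t, ht⟩ := hio.mul hjo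
      rw [ht, add_smul, one_smul, mul_comm, mul_smul] at hij
      have h2s : (2 : ℤ) • milnorSymbol g g = 0 := by
        rw [two_smul]; exact htwo
      rw [h2s, smul_zero, zero_add] at hij
      exact hij
  have hall : ∀ a b : kˣ, milnorSymbol a b = 0 := by
    intro a b
    obtain ⟨i, hi⟩ := Subgroup.mem_zpowers_iff.1 (hg a)
    obtain ⟨j, hj⟩ := Subgroup.mem_zpowers_iff.1 (hg b)
    rw [← hi, ← hj, milnorSymbol_zpow, hgg, smul_zero]
  refine ⟨hall, ?_⟩
  suffices hzero : ∀ z : MilnorK2 k, z = 0 by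
    exact ⟨fun x y => by rw [hzero x, hzero y]⟩
  intro z
  obtain ⟨w, rfl⟩ := QuotientAddGroup.mk_surjective z
  induction w using TensorProduct.induction_on with
  | zero => rfl
  | tmul x y => exact hall x.toMul y.toMul
  | add u v hu hv =>
    rw [QuotientAddGroup.mk_add, hu, hv, add_zero]
end
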